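/- Let r ≥ 2 be an integer, let α be a real number with 1/√2 ≤ α ≤ 1, and let g, h ∈ ℂ^r be vectors with ‖g‖ = ‖h‖ = 1. Suppose i ≠ j are indices such that |g_i| ≥ α and |h_j| ≥ α. Then |⟨g, h⟩| ≤ 2α√(1 − α²), where ⟨g,h⟩ = Σ_m conj(g_m) h_m is the standard Hermitian inner product. -/

import Mathlib

lemma stmt_4_key (a b u v α β : ℝ) (ha0 : 0 ≤ a) (hb0 : 0 ≤ b)
    (hu : 0 ≤ u) (hv : 0 ≤ v) (hau : a^2+u^2=1) (hbv : b^2+v^2=1)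
    (hαa : α ≤ a) (hbβ : b ≤ β) (hαβ : α^2+β^2=1) (hβα : β ≤ α) (hβ0 : 0 ≤ β) :
    a*b + u*v ≤ 2*α*β := by
  have hα0 : 0 ≤ α := le_trans hβ0 hβα
  have huβ : u ≤ β := by nlinarith
  have hvα : α ≤ v := by nlinarith
  have step1 : a*b + u*v ≤ a*β + u*α := by
    nlinarith [mul_nonneg (mul_nonneg (sub_nonneg.2 hβα) (sub_nonneg.2 hvα)) (sub_nonneg.2 hbβ),
      mul_nonneg (sub_nonneg.2 hαa) (sub_nonneg.2 hvα),
      mul_nonneg (sub_nonneg.2 huβ) hb0,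
      mul_nonneg (mul_nonneg (sub_nonneg.2 huβ) (sub_nonneg.2 hvα)) (sub_nonneg.2 hbβ)]
  have step2 : a*β + u*α ≤ 2*α*β := by
    nlinarith [mul_nonneg (mul_nonneg (sub_nonneg.2 hβα) (sub_nonneg.2 huβ)) (sub_nonneg.2 hαa),
      mul_nonneg (sub_nonneg.2 hαa) (sub_nonneg.2 huβ),
      mul_nonneg (mul_nonneg hβ0 (sub_nonneg.2 huβ)) (sub_nonneg.2 hαa)]
  linarith

/-- Lemma 2 of the paper: if unit vectors `g, h ∈ ℂ^r` lie in the
user-selection double cones around distinct standard basis directions `i ≠ j`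
(i.e. `|g_i| ≥ α` and `|h_j| ≥ α`) with `1/√2 ≤ α ≤ 1`, then
`|⟪g,h⟫| ≤ 2α√(1-α²)`. -/
theorem stmt_4 (r : ℕ) (hr : 2 ≤ r) (α : ℝ) (hα1 : 1 / Real.sqrt 2 ≤ α) (hα2 : α ≤ 1)
    (g h : EuclideanSpace ℂ (Fin r)) (hg : ‖g‖ = 1) (hh : ‖h‖ = 1)
    (i j : Fin r) (hij : i ≠ j)
    (hgi : α ≤ ‖g i‖) (hhj : α ≤ ‖h j‖) :
    ‖∑ m : Fin r, (starRingEnd ℂ) (g m) * h m‖ ≤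
      2 * α * Real.sqrt (1 - α ^ 2) := by
  have hα0 : 0 ≤ α := le_trans (by positivity) hα1
  have hα2sq : (1:ℝ)/2 ≤ α ^ 2 := by
    have h2 : (0:ℝ) < Real.sqrt 2 := by positivity
    have := mul_self_le_mul_self (by positivity : (0:ℝ) ≤ 1 / Real.sqrt 2) hα1
    have hs : Real.sqrt 2 * Real.sqrt 2 = 2 := Real.mul_self_sqrt (by norm_num)
    calc (1:ℝ)/2 = 1 / Real.sqrt 2 * (1 / Real.sqrt 2) := by
          rw [div_mul_div_comm, one_mul, hs]
      _ ≤ α * α := this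
      _ = α ^ 2 := (sq α).symm
  set β := Real.sqrt (1 - α ^ 2) with hβdef
  have h1α : (0:ℝ) ≤ 1 - α ^ 2 := by nlinarith
  have hβ0 : 0 ≤ β := Real.sqrt_nonneg _
  have hβsq : β ^ 2 = 1 - α ^ 2 := Real.sq_sqrt h1α
  have hβα : β ≤ α := by
    nlinarith [Real.sq_sqrt h1α, Real.sqrt_nonneg (1 - α ^ 2)]
  -- norms as sums of squares
  have hgsum : ∑ m : Fin r, ‖g m‖ ^ 2 = 1 := by
    have := EuclideanSpace.norm_eq g
    rw [hg] at this
    have h2 : Real.sqrt (∑ m : Fin r, ‖g m‖ ^ 2) = 1 := this.symm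
    have := Real.sqrt_eq_one.mp h2
    simpa using this
  have hhsum : ∑ m : Fin r, ‖h m‖ ^ 2 = 1 := by
    have := EuclideanSpace.norm_eq h
    rw [hh] at this
    have h2 : Real.sqrt (∑ m : Fin r, ‖h m‖ ^ 2) = 1 := this.symm
    have := Real.sqrt_eq_one.mp h2
    simpa using this
  set a := ‖g i‖ with hadef
  set b := ‖h i‖ with hbdef
  have ha0 : 0 ≤ a := norm_nonneg _
  have hb0 : 0 ≤ b := norm_nonneg _
  have hmemi : i ∈ (Finset.univ : Finset (Fin r)) := Finset.mem_univ i
  have hgsplit : a ^ 2 + ∑ m ∈ Finset.univ.erase i, ‖g m‖ ^ 2 = 1 := by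
    rw [hadef, ← hgsum]; exact Finset.add_sum_erase _ (fun m => ‖g m‖ ^ 2) hmemi
  have hhsplit : b ^ 2 + ∑ m ∈ Finset.univ.erase i, ‖h m‖ ^ 2 = 1 := by
    rw [hbdef, ← hhsum]; exact Finset.add_sum_erase _ (fun m => ‖h m‖ ^ 2) hmemi
  set Sg := ∑ m ∈ Finset.univ.erase i, ‖g m‖ ^ 2 with hSg
  set Sh := ∑ m ∈ Finset.univ.erase i, ‖h m‖ ^ 2 with hSh
  have hSg0 : 0 ≤ Sg := Finset.sum_nonneg fun m _ => sq_nonneg _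
  have hSh0 : 0 ≤ Sh := Finset.sum_nonneg fun m _ => sq_nonneg _
  set u := Real.sqrt Sg with hudef
  set v := Real.sqrt Sh with hvdef
  have hu0 : 0 ≤ u := Real.sqrt_nonneg _
  have hv0 : 0 ≤ v := Real.sqrt_nonneg _
  have husq : u ^ 2 = Sg := Real.sq_sqrt hSg0
  have hvsq : v ^ 2 = Sh := Real.sq_sqrt hSh0
  -- b ≤ β since |h j|² ≤ Sh = 1 - b²
  have hjmem : j ∈ Finset.univ.erase i := Finset.mem_erase.mpr ⟨hij.symm, Finset.mem_univ j⟩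
  have hjle : ‖h j‖ ^ 2 ≤ Sh :=
    Finset.single_le_sum (fun m _ => sq_nonneg (‖h m‖)) hjmem
  have hbβ : b ≤ β := by
    have hb2 : b ^ 2 ≤ 1 - α ^ 2 := by nlinarith [hhj]
    calc b = Real.sqrt (b ^ 2) := (Real.sqrt_sq hb0).symm
      _ ≤ β := Real.sqrt_le_sqrt hb2
  -- triangle inequality + Cauchy-Schwarz
  have hsplit : (∑ m : Fin r, (starRingEnd ℂ) (g m) * h m) =
      (starRingEnd ℂ) (g i) * h i + ∑ m ∈ Finset.univ.erase i, (starRingEnd ℂ) (g m) * h m :=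
    (Finset.add_sum_erase _ (fun m => (starRingEnd ℂ) (g m) * h m) hmemi).symm
  have htri : ‖∑ m : Fin r, (starRingEnd ℂ) (g m) * h m‖ ≤
      a * b + ∑ m ∈ Finset.univ.erase i, ‖g m‖ * ‖h m‖ := by
    rw [hsplit]
    refine le_trans (norm_add_le _ _) ?_
    have h1 : ‖(starRingEnd ℂ) (g i) * h i‖ = a * b := by
      rw [norm_mul, Complex.norm_conj]
    have h2 : ‖∑ m ∈ Finset.univ.erase i, (starRingEnd ℂ) (g m) * h m‖ ≤
        ∑ m ∈ Finset.univ.erase i, ‖g m‖ * ‖h m‖ := by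
      refine le_trans (norm_sum_le _ _) (le_of_eq ?_)
      exact Finset.sum_congr rfl fun m _ => by rw [norm_mul, Complex.norm_conj]
    rw [h1]
    exact add_le_add_right h2 _
  have hcs : ∑ m ∈ Finset.univ.erase i, ‖g m‖ * ‖h m‖ ≤ u * v := by
    have hcs2 := Finset.sum_mul_sq_le_sq_mul_sq (Finset.univ.erase i)
      (fun m => ‖g m‖) (fun m => ‖h m‖)
    have hnn : 0 ≤ ∑ m ∈ Finset.univ.erase i, ‖g m‖ * ‖h m‖ :=
      Finset.sum_nonneg fun m _ => mul_nonneg (norm_nonneg _) (norm_nonneg _)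
    have h3 : (∑ m ∈ Finset.univ.erase i, ‖g m‖ * ‖h m‖) ^ 2 ≤
        Sg * Sh := hcs2
    calc ∑ m ∈ Finset.univ.erase i, ‖g m‖ * ‖h m‖
        = Real.sqrt ((∑ m ∈ Finset.univ.erase i, ‖g m‖ * ‖h m‖) ^ 2) :=
          (Real.sqrt_sq hnn).symm
      _ ≤ Real.sqrt (Sg * Sh) := Real.sqrt_le_sqrt h3
      _ = u * v := Real.sqrt_mul hSg0 Sh
  calc ‖∑ m : Fin r, (starRingEnd ℂ) (g m) * h m‖
      ≤ a * b + u * v := le_trans htri (by linarith)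
    _ ≤ 2 * α * β := stmt_4_key a b u v α β ha0 hb0 hu0 hv0
        (by linarith [husq]) (by linarith [hvsq]) hgi hbβ (by linarith [hβsq]) hβα hβ0
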